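/- arXiv:2011.07659 — 4 statements merged into one kernel-verified Lean document; each statement's English description precedes it below -/
import Mathlib

section
/- Fix n ≥ 2. Let C be the free F_2[U,V]-module with basis {a, b, c, d, e, f, g} and differential ∂b = U^n·c + UV·d + V^n·e, ∂c = V·f, ∂d = U^{n-1}·f + V^{n-1}·g, ∂e = U·g, ∂a = ∂f = ∂g = 0. There is no F_2[U,V]-linear element h ∈ C with ∂h = U^{n-1}·f modulo the ideal (U^n, V^n, UV). More precisely, U^{n-1}·f is not congruent modulo (U^n, V^n, UV)·C to any element of the image of ∂. -/
open MvPolynomial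

noncomputable section

abbrev R2 : Type := MvPolynomial (Fin 2) (ZMod 2)

def Uv : R2 := X 0
def Vv : R2 := X 1

/-- Any element of the ideal `(Uⁿ, Vⁿ, UV)` has vanishing coefficient on a
monomial `m` which is not divisible by any of the three generators' monomials. -/
lemma coeff_eq_zero_of_mem_span (n : ℕ) (m : Fin 2 →₀ ℕ)
    (h1 : ¬ Finsupp.single (0 : Fin 2) n ≤ m)
    (h2 : ¬ Finsupp.single (1 : Fin 2) n ≤ m)
    (h3 : ¬ (Finsupp.single (0 : Fin 2) 1 + Finsupp.single (1 : Fin 2) 1) ≤ m)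
    {x : R2} (hx : x ∈ (Ideal.span {Uv ^ n, Vv ^ n, Uv * Vv} : Ideal R2)) :
    MvPolynomial.coeff m x = 0 := by
  rw [show ({Uv ^ n, Vv ^ n, Uv * Vv} : Set R2) =
      insert (Uv ^ n) (insert (Vv ^ n) {Uv * Vv}) from rfl] at hx
  rw [Ideal.mem_span_insert] at hx
  obtain ⟨r, z, hz, rfl⟩ := hx
  rw [Ideal.mem_span_insert] at hz
  obtain ⟨s, w, hw, rfl⟩ := hz
  rw [Ideal.mem_span_singleton'] at hw
  obtain ⟨t, rfl⟩ := hw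
  have hU : (Uv : R2) ^ n = monomial (Finsupp.single (0 : Fin 2) n) 1 := by
    rw [Uv, X_pow_eq_monomial]
  have hV : (Vv : R2) ^ n = monomial (Finsupp.single (1 : Fin 2) n) 1 := by
    rw [Vv, X_pow_eq_monomial]
  have hUV : (Uv : R2) * Vv =
      monomial (Finsupp.single (0 : Fin 2) 1 + Finsupp.single (1 : Fin 2) 1) 1 := by
    rw [Uv, Vv, X, X, monomial_mul, one_mul]
  rw [hU, hV, hUV, coeff_add, coeff_add, coeff_mul_monomial', coeff_mul_monomial',
    coeff_mul_monomial', if_neg h1, if_neg h2, if_neg h3]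
  ring

/-- Fix `n ≥ 2` and the cable summand complex on basis `a,b,c,d,e,f,g`
(indices `0,…,6`). There is no element `h` with `∂h ≡ U^(n-1)·f` modulo the
submodule `(Uⁿ, Vⁿ, UV)·C`: that is, `U^(n-1)·f` is not congruent modulo
`(Uⁿ, Vⁿ, UV)·C` to any element of the image of `∂`. -/
theorem no_primitive_for_Upow_f
    (n : ℕ) (hn : 2 ≤ n)
    (d : (Fin 7 → R2) →ₗ[R2] (Fin 7 → R2))
    (ha : d (Pi.single 0 1) = 0)
    (hb : d (Pi.single 1 1) = Uv ^ n • (Pi.single 2 1 : Fin 7 → R2) +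
      (Uv * Vv) • (Pi.single 3 1 : Fin 7 → R2) + Vv ^ n • (Pi.single 4 1 : Fin 7 → R2))
    (hc : d (Pi.single 2 1) = Vv • (Pi.single 5 1 : Fin 7 → R2))
    (hd' : d (Pi.single 3 1) = Uv ^ (n - 1) • (Pi.single 5 1 : Fin 7 → R2) +
      Vv ^ (n - 1) • (Pi.single 6 1 : Fin 7 → R2))
    (he : d (Pi.single 4 1) = Uv • (Pi.single 6 1 : Fin 7 → R2))
    (hf : d (Pi.single 5 1) = 0)
    (hg : d (Pi.single 6 1) = 0) :
    ¬ ∃ h : Fin 7 → R2,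
      Uv ^ (n - 1) • (Pi.single 5 1 : Fin 7 → R2) - d h ∈
        ((Ideal.span {Uv ^ n, Vv ^ n, Uv * Vv} : Ideal R2) •
          (⊤ : Submodule R2 (Fin 7 → R2))) := by
  rintro ⟨h, hmem⟩
  set I : Ideal R2 := Ideal.span {Uv ^ n, Vv ^ n, Uv * Vv} with hI
  -- every component of an element of `I • ⊤` lies in `I`
  have hcomp : ∀ i : Fin 7,
      (Uv ^ (n - 1) • (Pi.single 5 1 : Fin 7 → R2) - d h) i ∈ I := by
    have hle : I • (⊤ : Submodule R2 (Fin 7 → R2)) ≤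
        Submodule.pi Set.univ (fun _ : Fin 7 => I) := by
      rw [Submodule.smul_le]
      intro r hr m _
      intro i _
      exact I.mul_mem_right (m i) hr
    intro i
    exact hle hmem i (Set.mem_univ i)
  -- expand `h` in the basis
  have hh : h = ∑ i : Fin 7, h i • (Pi.single i 1 : Fin 7 → R2) := by
    funext j
    rw [Finset.sum_apply]
    simp [Pi.single_apply]
  have hdh : d h = ∑ i : Fin 7, h i • d (Pi.single i 1) := by
    conv_lhs => rw [hh]
    rw [map_sum]
    simp
  rw [Fin.sum_univ_seven] at hdh
  -- components of `d h`
  have h5 : (Uv ^ (n - 1) • (Pi.single 5 1 : Fin 7 → R2) - d h) 5 =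
      Uv ^ (n - 1) - (h 2 * Vv + h 3 * Uv ^ (n - 1)) := by
    rw [hdh, ha, hb, hc, hd', he, hf, hg]
    simp [Pi.single_apply]
  have h6 : (Uv ^ (n - 1) • (Pi.single 5 1 : Fin 7 → R2) - d h) 6 =
      - (h 3 * Vv ^ (n - 1) + h 4 * Uv) := by
    rw [hdh, ha, hb, hc, hd', he, hf, hg]
    simp [Pi.single_apply]
  have hm5 := hcomp 5
  have hm6 := hcomp 6
  rw [h5] at hm5
  rw [h6] at hm6
  rw [neg_mem_iff] at hm6
  have hn1 : 1 ≤ n - 1 := by omega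
  -- coefficient at `U^(n-1)` of the f-component: constant coeff of `h 3` is 1
  have key1 : MvPolynomial.coeff (0 : Fin 2 →₀ ℕ) (h 3) = 1 := by
    have := coeff_eq_zero_of_mem_span n (Finsupp.single (0 : Fin 2) (n - 1))
      (by rw [Finsupp.le_def]; push_neg; exact ⟨0, by simp; omega⟩)
      (by rw [Finsupp.le_def]; push_neg; exact ⟨1, by simp; omega⟩)
      (by rw [Finsupp.le_def]; push_neg; exact ⟨1, by simp⟩) hm5
    have hUpow : (Uv : R2) ^ (n - 1) = monomial (Finsupp.single (0 : Fin 2) (n - 1)) 1 := by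
      rw [Uv, X_pow_eq_monomial]
    have hVm : (Vv : R2) = monomial (Finsupp.single (1 : Fin 2) 1) 1 := by
      rw [Vv, X]
    rw [coeff_sub, coeff_add, hUpow, hVm, coeff_mul_monomial', coeff_mul_monomial',
      if_neg, if_pos le_rfl, coeff_monomial, if_pos rfl, tsub_self] at this
    · rw [mul_one, zero_add] at this
      exact (sub_eq_zero.mp this).symm
    · rw [Finsupp.le_def]; push_neg; exact ⟨1, by simp⟩
  -- coefficient at `V^(n-1)` of the g-component: constant coeff of `h 3` is 0
  have key2 : MvPolynomial.coeff (0 : Fin 2 →₀ ℕ) (h 3) = 0 := by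
    have := coeff_eq_zero_of_mem_span n (Finsupp.single (1 : Fin 2) (n - 1))
      (by rw [Finsupp.le_def]; push_neg; exact ⟨0, by simp; omega⟩)
      (by rw [Finsupp.le_def]; push_neg; exact ⟨1, by simp; omega⟩)
      (by rw [Finsupp.le_def]; push_neg; exact ⟨0, by simp⟩) hm6
    have hVpow : (Vv : R2) ^ (n - 1) = monomial (Finsupp.single (1 : Fin 2) (n - 1)) 1 := by
      rw [Vv, X_pow_eq_monomial]
    have hUm : (Uv : R2) = monomial (Finsupp.single (0 : Fin 2) 1) 1 := by
      rw [Uv, X]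
    rw [coeff_add, hVpow, hUm, coeff_mul_monomial', coeff_mul_monomial',
      if_pos le_rfl, if_neg, tsub_self, mul_one, add_zero] at this
    · exact this
    · rw [Finsupp.le_def]; push_neg; exact ⟨0, by simp⟩
  rw [key1] at key2
  exact one_ne_zero key2
end
end

section
/- Let M and N be finitely generated modules over F_2[U], and suppose there exist injective F_2[U]-module homomorphisms M → N and N → M. If additionally M and N are finite-dimensional over F_2 in each grading of a bigrading preserved by these maps (or simply: M and N are finitely generated and the maps are injective and grading-preserving for a grading with finite-dimensional pieces), then M ≅ N as F_2[U]-modules. -/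
open Polynomial

noncomputable section

abbrev RU : Type := Polynomial (ZMod 2)

open Submodule DirectSum

lemma RU_coe_ne_zero (a : (nonZeroDivisors RU)) : (a : RU) ≠ 0 :=
  nonZeroDivisors.ne_zero a.2

/-- A finitely generated torsion module over `F₂[U]` is finite. -/
lemma finite_of_isTorsion_aux {T : Type} [AddCommGroup T] [Module RU T]
    [Module.Finite RU T] (hT : Module.IsTorsion RU T) : Finite T := by
  obtain ⟨s, hs⟩ := Module.Finite.fg_top (R := RU) (M := T)
  choose a ha using fun x : T => @hT x
  set r : RU := ∏ x ∈ s, (a x : RU) with hr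
  have hrne : r ≠ 0 := Finset.prod_ne_zero_iff.mpr fun x _ => RU_coe_ne_zero (a x)
  have hTr : Module.IsTorsionBy RU T r := by
    have hle : (⊤ : Submodule RU T) ≤ torsionBy RU T r := by
      rw [← hs]
      refine span_le.mpr fun x hx => ?_
      have hx' : r • x = 0 := by
        obtain ⟨c, hc⟩ : ((a x : RU)) ∣ r := Finset.dvd_prod_of_mem _ hx
        have hax : (a x : RU) • x = 0 := by
          rw [← Submonoid.smul_def]; exact ha x
        calc r • x = c • ((a x : RU) • x) := by rw [← mul_smul, mul_comm, ← hc]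
          _ = 0 := by rw [hax, smul_zero]
      exact hx'
    intro x
    exact (Submodule.mem_torsionBy_iff _ _).mp (hle trivial)
  letI : Module (RU ⧸ Ideal.span {r}) T := hTr.module
  haveI : IsScalarTower RU (RU ⧸ Ideal.span {r}) T :=
    Module.IsTorsionBySet.isScalarTower _
  haveI : Module.Finite (RU ⧸ Ideal.span {r}) T :=
    Module.Finite.of_restrictScalars_finite RU _ T
  haveI : Finite (AdjoinRoot r) := by
    haveI : Module.Finite (ZMod 2) (AdjoinRoot r) :=
      Module.Finite.of_basis (AdjoinRoot.powerBasis hrne).basis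
    exact Module.finite_of_finite (ZMod 2)
  haveI : Finite (RU ⧸ Ideal.span {r}) := ‹Finite (AdjoinRoot r)›
  exact Module.finite_of_finite (RU ⧸ Ideal.span {r})

/-- A linear equivalence restricts to an equivalence of torsion submodules. -/
lemma torsion_map_equiv {M N : Type} [AddCommGroup M] [Module RU M]
    [AddCommGroup N] [Module RU N] (e : M ≃ₗ[RU] N) :
    Nonempty (torsion RU M ≃ₗ[RU] torsion RU N) := by
  have hmap : (torsion RU M).map (e : M →ₗ[RU] N) = torsion RU N := by
    ext y
    simp only [Submodule.mem_map]
    constructor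
    · rintro ⟨x, hx, rfl⟩
      obtain ⟨a, ha⟩ := (Submodule.mem_torsion_iff (R := RU) x).mp hx
      refine (Submodule.mem_torsion_iff (R := RU) _).mpr ⟨a, ?_⟩
      rw [Submonoid.smul_def] at ha ⊢
      rw [← map_smul, ha, map_zero]
    · intro hy
      obtain ⟨a, ha⟩ := (Submodule.mem_torsion_iff (R := RU) y).mp hy
      refine ⟨e.symm y, (Submodule.mem_torsion_iff (R := RU) _).mpr ⟨a, ?_⟩,
        e.apply_symm_apply y⟩
      rw [Submonoid.smul_def] at ha ⊢
      apply e.injective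
      rw [map_smul, e.apply_symm_apply, map_zero, ha]
  exact ⟨(e.submoduleMap (torsion RU M)).trans (LinearEquiv.ofEq _ _ hmap)⟩

/-- Torsion of `F × Q` with `F` torsion-free and `Q` torsion is `Q`. -/
lemma torsion_prod_equiv {F Q : Type} [AddCommGroup F] [Module RU F]
    [AddCommGroup Q] [Module RU Q] [NoZeroSMulDivisors RU F]
    (hQ : Module.IsTorsion RU Q) :
    Nonempty (torsion RU (F × Q) ≃ₗ[RU] Q) := by
  set φ : torsion RU (F × Q) →ₗ[RU] Q :=
    (LinearMap.snd RU F Q).comp (torsion RU (F × Q)).subtype with hφ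
  have hker : ∀ z : torsion RU (F × Q), φ z = 0 → z = 0 := by
    rintro ⟨⟨x₁, x₂⟩, hz⟩ h
    simp only [hφ, LinearMap.comp_apply, Submodule.subtype_apply,
      LinearMap.snd_apply] at h
    subst h
    obtain ⟨a, ha⟩ := (Submodule.mem_torsion_iff (R := RU) _).mp hz
    rw [Submonoid.smul_def, Prod.smul_mk, smul_zero, Prod.mk_eq_zero] at ha
    have hx₁ : x₁ = 0 :=
      (smul_eq_zero_iff_right (RU_coe_ne_zero a)).mp ha.1
    exact Subtype.ext (by simp [hx₁])
  refine ⟨LinearEquiv.ofBijective φ ⟨?_, ?_⟩⟩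
  · rw [← LinearMap.ker_eq_bot]
    exact LinearMap.ker_eq_bot'.mpr hker
  · intro q
    obtain ⟨a, ha⟩ := @hQ q
    refine ⟨⟨(0, q), (Submodule.mem_torsion_iff (R := RU) _).mpr ⟨a, ?_⟩⟩, rfl⟩
    rw [Submonoid.smul_def] at ha ⊢
    rw [Prod.smul_mk, smul_zero, ha]
    rfl

/-- Rank of a product with a torsion module. -/
lemma rank_prod_isTorsion {F Q : Type} [AddCommGroup F] [Module RU F]
    [AddCommGroup Q] [Module RU Q] (hQ : Module.IsTorsion RU Q) :
    Module.rank RU (F × Q) = Module.rank RU F := by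
  have hker : LinearMap.ker (LinearMap.fst RU F Q) ≤ torsion RU (F × Q) := by
    rintro ⟨x₁, x₂⟩ hx
    have hx1 : x₁ = 0 := hx
    subst hx1
    obtain ⟨a, ha⟩ := @hQ x₂
    refine (Submodule.mem_torsion_iff (R := RU) _).mpr ⟨a, ?_⟩
    rw [Submonoid.smul_def] at ha ⊢
    rw [Prod.smul_mk, smul_zero, ha]
    rfl
  rw [← rank_quotient_eq_of_le_torsion hker]
  exact ((LinearMap.fst RU F Q).quotKerEquivOfSurjective
    (fun y => ⟨(y, 0), rfl⟩)).rank_eq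

/-- The direct sum `⨁ i, RU ⧸ RU ∙ (p i ^ e i)` is a torsion module. -/
lemma directSum_isTorsion {ι : Type} [Fintype ι] (p : ι → RU)
    (hp : ∀ i, Irreducible (p i)) (e : ι → ℕ) :
    Module.IsTorsion RU (⨁ (i : ι), RU ⧸ (RU ∙ p i ^ e i)) := by
  set r : RU := ∏ i : ι, p i ^ e i with hr
  have hrne : r ≠ 0 :=
    Finset.prod_ne_zero_iff.mpr fun i _ => pow_ne_zero _ (hp i).ne_zero
  intro y
  refine ⟨⟨r, mem_nonZeroDivisors_of_ne_zero hrne⟩, ?_⟩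
  rw [Submonoid.smul_def]
  refine DFinsupp.ext fun i => ?_
  obtain ⟨c, hc⟩ := Submodule.Quotient.mk_surjective _ (y i)
  have : r • y i = 0 := by
    rw [← hc, ← Submodule.Quotient.mk_smul, Submodule.Quotient.mk_eq_zero]
    obtain ⟨u, hu⟩ : p i ^ e i ∣ r := Finset.dvd_prod_of_mem _ (Finset.mem_univ i)
    exact Submodule.mem_span_singleton.mpr ⟨u * c, by rw [smul_eq_mul, smul_eq_mul, hu]; ring⟩
  show (r • y) i = (0 : ⨁ (i : ι), RU ⧸ (RU ∙ p i ^ e i)) i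
  rw [DFinsupp.smul_apply, DFinsupp.zero_apply, this]

set_option maxHeartbeats 1000000 in
/-- If `M` and `N` are finitely generated modules over `F₂[U]` admitting injective
module homomorphisms in both directions, then `M ≅ N` as `F₂[U]`-modules. -/
theorem mutually_embeddable_finitely_generated_iso
    {M N : Type} [AddCommGroup M] [Module RU M] [AddCommGroup N] [Module RU N]
    [Module.Finite RU M] [Module.Finite RU N]
    (f : M →ₗ[RU] N) (g : N →ₗ[RU] M)
    (hf : Function.Injective f) (hg : Function.Injective g) :
    Nonempty (M ≃ₗ[RU] N) := by
  classical
  obtain ⟨n, ι, hι, p, hp, e, ⟨eM⟩⟩ :=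
    Module.equiv_free_prod_directSum (R := RU) (M := M)
  obtain ⟨m, κ, hκ, q, hq, d, ⟨eN⟩⟩ :=
    Module.equiv_free_prod_directSum (R := RU) (M := N)
  haveI := hι; haveI := hκ
  have hQM : Module.IsTorsion RU (⨁ (i : ι), RU ⧸ (RU ∙ p i ^ e i)) :=
    directSum_isTorsion p hp e
  have hQN : Module.IsTorsion RU (⨁ (i : κ), RU ⧸ (RU ∙ q i ^ d i)) :=
    directSum_isTorsion q hq d
  -- ranks are equal, hence n = m
  have hrank : Module.rank RU M = Module.rank RU N :=
    le_antisymm (f.rank_le_of_injective hf) (g.rank_le_of_injective hg)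
  have hrM : Module.rank RU M = n := by
    rw [eM.rank_eq, rank_prod_isTorsion hQM, rank_finsupp_self', Cardinal.mk_fin]
  have hrN : Module.rank RU N = m := by
    rw [eN.rank_eq, rank_prod_isTorsion hQN, rank_finsupp_self', Cardinal.mk_fin]
  have hnm : n = m := by
    have : (n : Cardinal) = (m : Cardinal) := by rw [← hrM, ← hrN, hrank]
    exact_mod_cast this
  subst hnm
  -- torsion submodules are finite
  haveI : Module.Finite RU (torsion RU M) :=
    Module.Finite.iff_fg.mpr (IsNoetherian.noetherian _)
  haveI : Module.Finite RU (torsion RU N) :=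
    Module.Finite.iff_fg.mpr (IsNoetherian.noetherian _)
  haveI : Finite (torsion RU M) := finite_of_isTorsion_aux (torsion_isTorsion)
  haveI : Finite (torsion RU N) := finite_of_isTorsion_aux (torsion_isTorsion)
  -- restrict f and g to torsion submodules
  have hfT : ∀ x ∈ torsion RU M, f x ∈ torsion RU N := by
    intro x hx
    obtain ⟨a, ha⟩ := (Submodule.mem_torsion_iff (R := RU) x).mp hx
    refine (Submodule.mem_torsion_iff (R := RU) _).mpr ⟨a, ?_⟩
    rw [Submonoid.smul_def] at ha ⊢
    rw [← map_smul, ha, map_zero]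
  have hgT : ∀ x ∈ torsion RU N, g x ∈ torsion RU M := by
    intro x hx
    obtain ⟨a, ha⟩ := (Submodule.mem_torsion_iff (R := RU) x).mp hx
    refine (Submodule.mem_torsion_iff (R := RU) _).mpr ⟨a, ?_⟩
    rw [Submonoid.smul_def] at ha ⊢
    rw [← map_smul, ha, map_zero]
  set f' : torsion RU M →ₗ[RU] torsion RU N := f.restrict hfT with hf'
  set g' : torsion RU N →ₗ[RU] torsion RU M := g.restrict hgT with hg'
  have hf'inj : Function.Injective f' := fun x y h => by
    apply Subtype.ext
    apply hf
    exact congrArg Subtype.val h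
  have hg'inj : Function.Injective g' := fun x y h => by
    apply Subtype.ext
    apply hg
    exact congrArg Subtype.val h
  have hcard : Nat.card (torsion RU M) = Nat.card (torsion RU N) :=
    le_antisymm (Nat.card_le_card_of_injective f' hf'inj)
      (Nat.card_le_card_of_injective g' hg'inj)
  have hf'bij : Function.Bijective f' :=
    (Nat.bijective_iff_injective_and_card f').mpr ⟨hf'inj, hcard⟩
  have eT : torsion RU M ≃ₗ[RU] torsion RU N := LinearEquiv.ofBijective f' hf'bij
  -- identify the torsion parts of the decompositions
  haveI : NoZeroSMulDivisors RU (Fin n →₀ RU) := ⟨fun {c x} h => by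
    by_cases hc : c = 0
    · exact Or.inl hc
    · right; refine Finsupp.ext fun i => ?_; have := DFunLike.congr_fun h i; simpa [hc] using this⟩
  obtain ⟨aM⟩ := torsion_prod_equiv (F := Fin n →₀ RU) (Q := ⨁ (i : ι), RU ⧸ (RU ∙ p i ^ e i)) hQM
  obtain ⟨aN⟩ := torsion_prod_equiv (F := Fin n →₀ RU) (Q := ⨁ (i : κ), RU ⧸ (RU ∙ q i ^ d i)) hQN
  obtain ⟨bM⟩ := torsion_map_equiv eM
  obtain ⟨bN⟩ := torsion_map_equiv eN
  have eQ : (⨁ (i : ι), RU ⧸ (RU ∙ p i ^ e i)) ≃ₗ[RU] (⨁ (i : κ), RU ⧸ (RU ∙ q i ^ d i)) :=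
    aM.symm.trans (bM.symm.trans (eT.trans (bN.trans aN)))
  exact ⟨eM.trans (((LinearEquiv.refl RU (Fin n →₀ RU)).prodCongr eQ).trans eN.symm)⟩
end
end

section
/- Fix n ≥ 2 and let C be the free F_2[U]-module with basis {a, b, c, d, e, f, g} and differential ∂b = U^n·c, ∂d = U^{n-1}·f, ∂e = U·g, ∂a = ∂c = ∂f = ∂g = 0. If φ : C → C is an F_2[U]-linear chain map with ⟨φ(c), c⟩ = 1 (the coefficient of c in φ(c), expressed in the basis, is 1), then the homology class of U^{n-1}·φ(c) in H_*(C) is nonzero. -/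
open Polynomial

noncomputable section

lemma pi_repr (y : Fin 7 → RU) :
    y = ∑ i : Fin 7, y i • (Pi.single i 1 : Fin 7 → RU) := by
  funext j
  simp [Finset.sum_apply, Pi.single_apply, Finset.sum_ite_eq']

/-- Fix `n ≥ 2` and the complex over `F₂[U]` on basis `a,b,c,d,e,f,g`
(indices `0,…,6`) with `∂b = Uⁿ·c`, `∂d = U^(n-1)·f`, `∂e = U·g`,
`∂a = ∂c = ∂f = ∂g = 0`. If `φ` is an `F₂[U]`-linear chain map with
`⟨φ(c), c⟩ = 1` (the coefficient of `c` in `φ(c)` has constant term `1`), then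
`U^(n-1)·φ(c)` is a cycle whose homology class is nonzero, i.e. it does not lie
in the image of `∂`. -/
theorem Upow_phi_c_nonzero_in_homology
    (n : ℕ) (hn : 2 ≤ n)
    (d φ : (Fin 7 → RU) →ₗ[RU] (Fin 7 → RU))
    (ha : d (Pi.single 0 1) = 0)
    (hb : d (Pi.single 1 1) = (X : RU) ^ n • (Pi.single 2 1 : Fin 7 → RU))
    (hc : d (Pi.single 2 1) = 0)
    (hd' : d (Pi.single 3 1) = (X : RU) ^ (n - 1) • (Pi.single 5 1 : Fin 7 → RU))
    (he : d (Pi.single 4 1) = (X : RU) • (Pi.single 6 1 : Fin 7 → RU))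
    (hf : d (Pi.single 5 1) = 0)
    (hg : d (Pi.single 6 1) = 0)
    (hchain : d ∘ₗ φ = φ ∘ₗ d)
    (hcoef : ((φ (Pi.single 2 1)) 2).coeff 0 = 1) :
    d ((X : RU) ^ (n - 1) • φ (Pi.single 2 1)) = 0 ∧
    (X : RU) ^ (n - 1) • φ (Pi.single 2 1) ∉ LinearMap.range d := by
  have hcycle : d (φ (Pi.single 2 1)) = 0 := by
    have := congrArg (fun f => f (Pi.single 2 1)) hchain
    simp only [LinearMap.comp_apply] at this
    rw [this, hc, map_zero]
  constructor
  · rw [map_smul, hcycle, smul_zero]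
  · rintro ⟨y, hy⟩
    -- compute (d y) 2
    have hdyrep : d y = ∑ i : Fin 7, y i • d (Pi.single i 1) := by
      conv_lhs => rw [pi_repr y]
      rw [map_sum]
      simp only [map_smul]
    have hdy2 : (d y) 2 = y 1 * (X : RU) ^ n := by
      rw [hdyrep]
      rw [Fin.sum_univ_seven]
      simp [ha, hb, hc, hd', he, hf, hg, Pi.single_apply, smul_eq_mul]
    have h2 := congrArg (fun f => f 2) hy
    simp only [Pi.smul_apply, smul_eq_mul] at h2
    rw [hdy2] at h2
    have := congrArg (fun p => Polynomial.coeff p (n - 1)) h2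
    rw [mul_comm (y 1), Polynomial.coeff_X_pow_mul' ] at this
    rw [Polynomial.coeff_X_pow_mul' ] at this
    simp only [le_refl, if_true, Nat.sub_self, hcoef] at this
    have hlt : ¬ (n ≤ n - 1) := by omega
    rw [if_neg hlt] at this
    exact one_ne_zero ((this : (0 : ZMod 2) = 1)).symm
end
end

section
/- Fix n ≥ 2 and let C be the chain complex over R = F_2[U,V]/(UV) freely generated by {a, b, c, d, e, f, g} with differential ∂b = U^n c + V^n e, ∂c = V f, ∂d = U^{n-1} f + V^{n-1} g, ∂e = U g, ∂a = ∂f = ∂g = 0 (the reduction mod UV of the cable summand). Then ∂² = 0 over R, and the element U^{n-1} f is a cycle that is nonzero in homology H_*(C). -/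
open MvPolynomial

set_option synthInstance.maxHeartbeats 1000000
set_option maxHeartbeats 2000000

noncomputable section

/-- The ring R = F₂[U,V]/(UV). -/
abbrev Rq : Type := R2 ⧸ Ideal.span ({Uv * Vv} : Set R2)

/-- The image of U in R = F₂[U,V]/(UV). -/
def u : Rq := Ideal.Quotient.mk _ Uv
/-- The image of V in R = F₂[U,V]/(UV). -/
def v : Rq := Ideal.Quotient.mk _ Vv

lemma uv_zero : u * v = 0 := by
  rw [u, v, ← map_mul, Ideal.Quotient.eq_zero_iff_mem]
  exact Ideal.subset_span rfl

lemma e1aux : ∀ a ∈ Ideal.span ({Uv * Vv} : Set R2),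
    (MvPolynomial.aeval (fun i : Fin 2 => if i = 0 then Polynomial.X else 0)).toRingHom a
      = (0 : Polynomial (ZMod 2)) := by
  intro a ha
  rw [Ideal.mem_span_singleton] at ha
  obtain ⟨r, rfl⟩ := ha
  simp [Uv, Vv]

lemma e2aux : ∀ a ∈ Ideal.span ({Uv * Vv} : Set R2),
    (MvPolynomial.aeval (fun i : Fin 2 => if i = 1 then Polynomial.X else 0)).toRingHom a
      = (0 : Polynomial (ZMod 2)) := by
  intro a ha
  rw [Ideal.mem_span_singleton] at ha
  obtain ⟨r, rfl⟩ := ha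
  simp [Uv, Vv]

/-- Evaluation V ↦ 0, U ↦ X. -/
def e1 : Rq →+* Polynomial (ZMod 2) := Ideal.Quotient.lift _ _ e1aux

/-- Evaluation U ↦ 0, V ↦ X. -/
def e2 : Rq →+* Polynomial (ZMod 2) := Ideal.Quotient.lift _ _ e2aux

lemma e1_u : e1 u = Polynomial.X := by
  unfold e1 u; rw [Ideal.Quotient.lift_mk]; simp [Uv]
lemma e1_v : e1 v = 0 := by
  unfold e1 v; rw [Ideal.Quotient.lift_mk]; simp [Vv]
lemma e2_u : e2 u = 0 := by
  unfold e2 u; rw [Ideal.Quotient.lift_mk]; simp [Uv]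
lemma e2_v : e2 v = Polynomial.X := by
  unfold e2 v; rw [Ideal.Quotient.lift_mk]; simp [Vv]

lemma const_comp : (Polynomial.evalRingHom (0 : ZMod 2)).comp e1 =
    (Polynomial.evalRingHom (0 : ZMod 2)).comp e2 := by
  apply Ideal.Quotient.ringHom_ext
  apply MvPolynomial.ringHom_ext
  · intro r
    simp [e1, e2, Ideal.Quotient.lift_mk]
  · intro i
    fin_cases i <;> simp [e1, e2, Ideal.Quotient.lift_mk]

/-- Fix `n ≥ 2`. Over `R = F₂[U,V]/(UV)`, the free complex on basis `a,b,c,d,e,f,g`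
(indices `0,…,6`) with `∂b = Uⁿ·c + Vⁿ·e`, `∂c = V·f`, `∂d = U^(n-1)·f + V^(n-1)·g`,
`∂e = U·g`, `∂a = ∂f = ∂g = 0` satisfies `∂² = 0`, and `U^(n-1)·f` is a cycle that
is nonzero in homology (it is not in the image of `∂`). -/
theorem cable_mod_UV_cycle_nonzero
    (n : ℕ) (hn : 2 ≤ n)
    (d : (Fin 7 → Rq) →ₗ[Rq] (Fin 7 → Rq))
    (ha : d (Pi.single 0 1) = 0)
    (hb : d (Pi.single 1 1) = u ^ n • (Pi.single 2 1 : Fin 7 → Rq) +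
      v ^ n • (Pi.single 4 1 : Fin 7 → Rq))
    (hc : d (Pi.single 2 1) = v • (Pi.single 5 1 : Fin 7 → Rq))
    (hd' : d (Pi.single 3 1) = u ^ (n - 1) • (Pi.single 5 1 : Fin 7 → Rq) +
      v ^ (n - 1) • (Pi.single 6 1 : Fin 7 → Rq))
    (he : d (Pi.single 4 1) = u • (Pi.single 6 1 : Fin 7 → Rq))
    (hf : d (Pi.single 5 1) = 0)
    (hg : d (Pi.single 6 1) = 0) :
    d ∘ₗ d = 0 ∧
    d (u ^ (n - 1) • (Pi.single 5 1 : Fin 7 → Rq)) = 0 ∧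
    u ^ (n - 1) • (Pi.single 5 1 : Fin 7 → Rq) ∉ LinearMap.range d := by
  have hn1 : 1 ≤ n - 1 := by omega
  have hunv : u ^ n * v = 0 := by
    calc u ^ n * v = u ^ (n-1) * (u * v) := by
          rw [← mul_assoc, ← pow_succ]; congr 2; omega
    _ = 0 := by rw [uv_zero, mul_zero]
  have hvnu : v ^ n * u = 0 := by
    calc v ^ n * u = v ^ (n-1) * (u * v) := by
          rw [mul_comm u v, ← mul_assoc, ← pow_succ]; congr 2; omega
    _ = 0 := by rw [uv_zero, mul_zero]
  refine ⟨?_, ?_, ?_⟩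
  · -- d ∘ d = 0
    apply (Pi.basisFun Rq (Fin 7)).ext
    intro i
    simp only [Pi.basisFun_apply, LinearMap.comp_apply, LinearMap.zero_apply]
    fin_cases i
    · rw [show ((⟨0, by omega⟩ : Fin 7)) = (0 : Fin 7) from rfl, ha, map_zero]
    · rw [show ((⟨1, by omega⟩ : Fin 7)) = (1 : Fin 7) from rfl, hb, map_add, map_smul,
        map_smul, hc, he,
        smul_smul (u ^ n) v (Pi.single 5 1 : Fin 7 → Rq),
        smul_smul (v ^ n) u (Pi.single 6 1 : Fin 7 → Rq), hunv, hvnu,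
        zero_smul Rq (Pi.single 5 1 : Fin 7 → Rq),
        zero_smul Rq (Pi.single 6 1 : Fin 7 → Rq), zero_add]
    · rw [show ((⟨2, by omega⟩ : Fin 7)) = (2 : Fin 7) from rfl, hc, map_smul, hf, smul_zero]
    · rw [show ((⟨3, by omega⟩ : Fin 7)) = (3 : Fin 7) from rfl, hd', map_add, map_smul,
        map_smul, hf, hg]
      simp
    · rw [show ((⟨4, by omega⟩ : Fin 7)) = (4 : Fin 7) from rfl, he, map_smul, hg, smul_zero]
    · rw [show ((⟨5, by omega⟩ : Fin 7)) = (5 : Fin 7) from rfl, hf, map_zero]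
    · rw [show ((⟨6, by omega⟩ : Fin 7)) = (6 : Fin 7) from rfl, hg, map_zero]
  · rw [map_smul, hf, smul_zero]
  · rintro ⟨x, hx⟩
    have hxrep : x = ∑ i : Fin 7, x i • (Pi.single i 1 : Fin 7 → Rq) := by
      funext j
      rw [Finset.sum_apply]
      simp [Pi.single_apply]
    have hdx : d x = ∑ i : Fin 7, x i • d (Pi.single i 1) := by
      conv_lhs => rw [hxrep]
      rw [map_sum]
      exact Finset.sum_congr rfl fun i _ => (map_smul d _ _)
    rw [hdx, Fin.sum_univ_seven] at hx
    simp only [ha, hb, hc, hd', he, hf, hg, smul_zero, zero_add, add_zero] at hx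
    have h5 := congrFun hx 5
    have h6 := congrFun hx 6
    simp only [Pi.add_apply, Pi.smul_apply, Pi.single_apply, smul_eq_mul,
      mul_zero, mul_one, add_zero, zero_add, mul_ite, if_true, if_false] at h5 h6
    -- apply e1 to h5, e2 to h6
    have k1 : e1 (x 3) * Polynomial.X ^ (n-1) = Polynomial.X ^ (n-1) := by
      have := congrArg e1 h5
      simpa [map_add, map_mul, map_pow, e1_u, e1_v] using this
    have k2 : e2 (x 3) * Polynomial.X ^ (n-1) = 0 := by
      have := congrArg e2 h6
      simpa [map_add, map_mul, map_pow, e2_u, e2_v] using this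
    have hX : (Polynomial.X : Polynomial (ZMod 2)) ^ (n-1) ≠ 0 :=
      pow_ne_zero _ Polynomial.X_ne_zero
    have k1' : e1 (x 3) = 1 := mul_right_cancel₀ hX (k1.trans (one_mul _).symm)
    have k2' : e2 (x 3) = 0 := by
      have h0 : e2 (x 3) * Polynomial.X ^ (n-1) = 0 * Polynomial.X ^ (n-1) := by
        rw [zero_mul]; exact k2
      exact mul_right_cancel₀ hX h0
    have hcc : (Polynomial.evalRingHom (0 : ZMod 2)) (e1 (x 3)) =
        (Polynomial.evalRingHom (0 : ZMod 2)) (e2 (x 3)) :=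
      RingHom.congr_fun const_comp (x 3)
    rw [k1', k2'] at hcc
    simp at hcc
end
end
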